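/- arXiv:2012.04805 — 3 statements merged into one kernel-verified Lean document; each statement's English description precedes it below -/
import Mathlib

section
/- Let 0 < s < 1/2, iκ² ∈ ℝ with |κ| ≥ 1, and f ∈ H^{-s-1/2}_κ. Then the operator (∂+iκ²)^{-s-1/2} ∘ (multiplication by f) ∘ (∂-iκ²)^{-s-1/2} is bounded on L²(ℝ) with operator norm ≲ |κ|^{-2s} ‖f‖_{H^{-s-1/2}_κ}. -/
open MeasureTheory Complex Filter

/-- The Fourier transform with the paper's normalization:
`f̂(ξ) = (2π)^{-1/2} ∫ e^{-iξx} f(x) dx`. -/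
noncomputable def ft (f : ℝ → ℂ) (ξ : ℝ) : ℂ :=
  (↑(Real.sqrt (2 * Real.pi)))⁻¹ * ∫ x : ℝ, Complex.exp (-Complex.I * (ξ : ℂ) * (x : ℂ)) * f x

/-- The square of the weighted Sobolev norm `‖f‖²_{H^σ_κ} = ∫ (4|κ|⁴+ξ²)^σ |f̂(ξ)|² dξ`,
where `w = |κ|`. -/
noncomputable def sobNormSq (w σ : ℝ) (f : ℝ → ℂ) : ℝ :=
  ∫ ξ : ℝ, (4 * w ^ 4 + ξ ^ 2) ^ σ * ‖ft f ξ‖ ^ 2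

open scoped ENNReal

namespace OpBdAux

lemma holder2 {f g : ℝ → ℝ≥0∞} (hf : AEMeasurable f) (hg : AEMeasurable g) :
    ∫⁻ x, f x * g x ≤ (∫⁻ x, f x ^ (2:ℝ)) ^ (1/2:ℝ) * (∫⁻ x, g x ^ (2:ℝ)) ^ (1/2:ℝ) := by
  have hpq : Real.HolderConjugate 2 2 := .two_two
  simpa using ENNReal.lintegral_mul_le_Lp_mul_Lq volume hpq hf hg

lemma lint_sub_left (f : ℝ → ℝ≥0∞) (a : ℝ) : ∫⁻ x, f (a - x) = ∫⁻ x, f x :=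
  (Measure.measurePreserving_sub_left volume a).lintegral_comp_emb
    (MeasurableEquiv.subLeft a).measurableEmbedding f

lemma lint_sub_right (f : ℝ → ℝ≥0∞) (a : ℝ) : ∫⁻ x, f (x - a) = ∫⁻ x, f x :=
  (measurePreserving_sub_right volume a).lintegral_comp_emb
    (MeasurableEquiv.subRight a).measurableEmbedding f

lemma ofReal_sq {x : ℝ} (hx : 0 ≤ x) :
    (ENNReal.ofReal x) ^ (2:ℝ) = ENNReal.ofReal (x ^ 2) := by
  rw [ENNReal.ofReal_rpow_of_nonneg hx (by norm_num)]
  congr 1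
  rw [show (2:ℝ) = ((2:ℕ):ℝ) by norm_num, Real.rpow_natCast]

lemma ofReal_half {x : ℝ} (hx : 0 ≤ x) :
    (ENNReal.ofReal x) ^ (1/2:ℝ) = ENNReal.ofReal (Real.sqrt x) := by
  rw [ENNReal.ofReal_rpow_of_nonneg hx (by norm_num), Real.sqrt_eq_rpow]

end OpBdAux

open OpBdAux

set_option maxHeartbeats 4000000 in
/-- The operator bound `‖(∂+iκ²)^{-s-1/2} f (∂-iκ²)^{-s-1/2}‖_op ≲ |κ|^{-2s} ‖f‖_{H^{-s-1/2}_κ}`,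
expressed on the Fourier side: the bilinear form of the operator against (Fourier transforms of)
test functions `φ, ψ` is bounded by `C |κ|^{-2s} ‖f‖_{H^{-s-1/2}_κ} ‖φ‖_{L²} ‖ψ‖_{L²}`. -/
theorem operator_bound (s : ℝ) (hs0 : 0 < s) (hs1 : s < 1/2) :
    ∃ C > 0, ∀ (κ : ℂ) (f : ℝ → ℂ),
      (Complex.I * κ ^ 2).im = 0 → 1 ≤ ‖κ‖ → Integrable f →
      ∀ (φ ψ : SchwartzMap ℝ ℂ),
        ‖∫ ξ : ℝ, ∫ η : ℝ,
            (starRingEnd ℂ) (φ ξ) *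
              ((Complex.I * κ ^ 2 + Complex.I * (ξ : ℂ)) ^ (-(s : ℂ) - 1/2)) *
              (ft f (ξ - η)) * (↑(Real.sqrt (2 * Real.pi)))⁻¹ *
              ((Complex.I * κ ^ 2 - Complex.I * (η : ℂ)) ^ (-(s : ℂ) - 1/2)) * ψ η‖ ≤
          C * (‖κ‖) ^ (-(2 * s)) *
            Real.sqrt (sobNormSq (‖κ‖) (-s - 1/2) f) *
            Real.sqrt (∫ ξ : ℝ, ‖φ ξ‖ ^ 2) * Real.sqrt (∫ η : ℝ, ‖ψ η‖ ^ 2) := by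
  set σ : ℝ := s + 1/2 with hσdef
  have hσhalf : 1/2 < σ := by rw [hσdef]; linarith
  have hσpos : 0 < σ := by rw [hσdef]; linarith
  -- base weight integrability
  have hCs_int : Integrable (fun u : ℝ => (1 + u^2) ^ (-σ)) := by
    have h := integrable_rpow_neg_one_add_norm_sq (E := ℝ) (μ := volume) (r := 2*σ)
      (by rw [hσdef]; simp; linarith)
    have heq : (fun x : ℝ => ((1:ℝ) + ‖x‖^2) ^ (-(2*σ)/2)) = fun u : ℝ => (1 + u^2) ^ (-σ) := by
      funext x
      rw [Real.norm_eq_abs, _root_.sq_abs, show -(2*σ)/2 = -σ by ring]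
    rwa [heq] at h
  set Cs : ℝ := ∫ u : ℝ, (1 + u^2) ^ (-σ) with hCsdef
  have hCs0 : 0 ≤ Cs := integral_nonneg fun u => Real.rpow_nonneg (by positivity) _
  refine ⟨2 * 8 ^ (σ/2) * Real.sqrt Cs + 1, by positivity, ?_⟩
  intro κ f himκ hκ hf φ ψ
  set w : ℝ := ‖κ‖ with hwdef
  have hw1 : (1:ℝ) ≤ w := hκ
  have hw0 : (0:ℝ) < w := by linarith
  have hw2 : (1:ℝ) ≤ w^2 := by nlinarith [hw1]
  have hw4 : (1:ℝ) ≤ w^4 := by nlinarith [hw2]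
  -- the real number r with I κ² = r
  set r : ℝ := (Complex.I * κ^2).re with hrdef
  have hIκ : (Complex.I * κ^2) = (r : ℂ) := by
    apply Complex.ext
    · simp [hrdef]
    · simp [himκ]
  have habsr : |r| = w^2 := by
    have : ‖Complex.I * κ^2‖ = w^2 := by
      rw [norm_mul, Complex.norm_I, one_mul, norm_pow, hwdef]
    rwa [hIκ, Complex.norm_real, Real.norm_eq_abs] at this
  have hr2 : r^2 = w^4 := by
    have := _root_.sq_abs r
    rw [habsr] at this
    nlinarith [this]
  have hrne : r ≠ 0 := by
    intro h
    rw [h] at habsr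
    simp at habsr
    nlinarith [habsr]
  -- the weight functions
  set a1 : ℝ → ℝ := fun t => (w^4 + t^2) ^ (-(σ/2)) with ha1def
  set m1 : ℝ → ℝ := fun t => (4*w^4 + t^2) ^ (σ/2) with hm1def
  have hbase_pos : ∀ t : ℝ, (0:ℝ) < w^4 + t^2 := fun t => by nlinarith [sq_nonneg t]
  have hbase4_pos : ∀ t : ℝ, (0:ℝ) < 4*w^4 + t^2 := fun t => by nlinarith [sq_nonneg t]
  have ha1nn : ∀ t, 0 ≤ a1 t := fun t => Real.rpow_nonneg (hbase_pos t).le _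
  have hm1nn : ∀ t, 0 ≤ m1 t := fun t => Real.rpow_nonneg (hbase4_pos t).le _
  -- exponent as a real cast
  have hcexp : (-(s:ℂ) - 1/2) = ((-σ : ℝ) : ℂ) := by
    rw [hσdef]; push_cast; ring
  -- norms of the resolvent symbols
  have hcpow : ∀ z : ℂ, z ≠ 0 → ‖z ^ (-(s:ℂ) - 1/2)‖ = ‖z‖ ^ (-σ) := by
    intro z hz
    rw [hcexp, Complex.norm_cpow_of_ne_zero hz]
    simp
  have habs_plus : ∀ ξ : ℝ, ‖(Complex.I * κ^2 + Complex.I * (ξ:ℂ)) ^ (-(s:ℂ) - 1/2)‖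
      = a1 ξ := by
    intro ξ
    have hz : Complex.I * κ^2 + Complex.I * (ξ:ℂ) = (r:ℂ) + (ξ:ℝ) * Complex.I := by
      rw [hIκ]; ring
    have hzne : ((r:ℂ) + (ξ:ℝ) * Complex.I) ≠ 0 := by
      intro h
      have : ((r:ℂ) + (ξ:ℝ) * Complex.I).re = 0 := by rw [h]; simp
      simp at this
      exact hrne this
    rw [hz, hcpow _ hzne, Complex.norm_add_mul_I, hr2, ha1def]
    rw [Real.sqrt_eq_rpow, ← Real.rpow_mul (by positivity)]
    congr 1; ring
  have habs_minus : ∀ η : ℝ, ‖(Complex.I * κ^2 - Complex.I * (η:ℂ)) ^ (-(s:ℂ) - 1/2)‖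
      = a1 η := by
    intro η
    have hz : Complex.I * κ^2 - Complex.I * (η:ℂ) = (r:ℂ) + (-η:ℝ) * Complex.I := by
      rw [hIκ]; push_cast; ring
    have hzne : ((r:ℂ) + (-η:ℝ) * Complex.I) ≠ 0 := by
      intro h
      have : ((r:ℂ) + (-η:ℝ) * Complex.I).re = 0 := by rw [h]; simp
      simp at this
      exact hrne this
    rw [hz, hcpow _ hzne, Complex.norm_add_mul_I, hr2, ha1def]
    rw [Real.sqrt_eq_rpow, ← Real.rpow_mul (by positivity), neg_sq]
    congr 1; ring
  -- continuity of ft f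
  have hftc : Continuous (ft f) := by
    apply Continuous.mul continuous_const
    apply continuous_of_dominated (bound := fun x => ‖f x‖)
    · intro ξ
      apply AEStronglyMeasurable.mul _ hf.1
      exact (Complex.continuous_exp.comp (continuous_const.mul Complex.continuous_ofReal)).aestronglyMeasurable
    · intro ξ
      filter_upwards with x
      rw [norm_mul]
      have : ‖Complex.exp (-Complex.I * (ξ:ℂ) * (x:ℂ))‖ = 1 := by
        rw [Complex.norm_exp]
        simp
      rw [this, one_mul]
    · exact hf.norm
    · filter_upwards with x
      exact (Complex.continuous_exp.comp ((continuous_const.mul Complex.continuous_ofReal).mul continuous_const)).mul continuous_const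
  -- pointwise bound for ft f
  set M : ℝ := (Real.sqrt (2*Real.pi))⁻¹ * ∫ x, ‖f x‖ with hMdef
  have hM0 : 0 ≤ M := by
    apply mul_nonneg (by positivity)
    exact integral_nonneg fun x => norm_nonneg _
  have hftbd : ∀ ζ : ℝ, ‖ft f ζ‖ ≤ M := by
    intro ζ
    rw [ft, norm_mul, hMdef]
    gcongr
    · rw [norm_inv, Complex.norm_real, Real.norm_eq_abs, _root_.abs_of_nonneg (Real.sqrt_nonneg _)]
    · refine (norm_integral_le_integral_norm _).trans (le_of_eq ?_)
      congr 1
      funext x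
      rw [norm_mul]
      have : ‖Complex.exp (-Complex.I * (ζ:ℂ) * (x:ℂ))‖ = 1 := by
        rw [Complex.norm_exp]; simp
      rw [this, one_mul]
  -- the normalized Fourier coefficient function g
  set g : ℝ → ℝ := fun ζ => (4*w^4 + ζ^2) ^ (-(σ/2)) * ‖ft f ζ‖ with hgdef
  have hgnn : ∀ ζ, 0 ≤ g ζ := fun ζ =>
    mul_nonneg (Real.rpow_nonneg (hbase4_pos ζ).le _) (norm_nonneg _)
  have hgc : Continuous g := by
    apply Continuous.mul _ hftc.norm
    exact Continuous.rpow_const (continuous_const.add (continuous_pow 2)) fun t => Or.inl (hbase4_pos t).ne'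
  have hft_eq : ∀ ζ : ℝ, ‖ft f ζ‖ = m1 ζ * g ζ := by
    intro ζ
    rw [hgdef, hm1def, ← mul_assoc, ← Real.rpow_add (hbase4_pos ζ)]
    norm_num
  -- pointwise key inequality
  have hone : ∀ t : ℝ, (w^4 + t^2)^(σ/2) * a1 t = 1 := by
    intro t
    rw [ha1def, ← Real.rpow_add (hbase_pos t)]
    norm_num
  have hkey : ∀ ξ η : ℝ, m1 (ξ - η) ≤ 8^(σ/2) * ((w^4+ξ^2)^(σ/2) + (w^4+η^2)^(σ/2)) := by
    intro ξ η
    have h8 : (0:ℝ) ≤ 8 ^ (σ/2) := Real.rpow_nonneg (by norm_num) _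
    rcases le_total (ξ^2) (η^2) with h | h
    · have hb : 4*w^4 + (ξ-η)^2 ≤ 8 * (w^4 + η^2) := by nlinarith [sq_nonneg (ξ+η)]
      calc m1 (ξ-η) ≤ (8 * (w^4 + η^2))^(σ/2) :=
            Real.rpow_le_rpow (hbase4_pos _).le hb (by positivity)
        _ = 8^(σ/2) * (w^4+η^2)^(σ/2) := Real.mul_rpow (by norm_num) (hbase_pos η).le
        _ ≤ 8^(σ/2) * ((w^4+ξ^2)^(σ/2) + (w^4+η^2)^(σ/2)) := by
            apply mul_le_mul_of_nonneg_left _ h8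
            exact le_add_of_nonneg_left (Real.rpow_nonneg (hbase_pos ξ).le _)
    · have hb : 4*w^4 + (ξ-η)^2 ≤ 8 * (w^4 + ξ^2) := by nlinarith [sq_nonneg (ξ+η)]
      calc m1 (ξ-η) ≤ (8 * (w^4 + ξ^2))^(σ/2) :=
            Real.rpow_le_rpow (hbase4_pos _).le hb (by positivity)
        _ = 8^(σ/2) * (w^4+ξ^2)^(σ/2) := Real.mul_rpow (by norm_num) (hbase_pos ξ).le
        _ ≤ 8^(σ/2) * ((w^4+ξ^2)^(σ/2) + (w^4+η^2)^(σ/2)) := by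
            apply mul_le_mul_of_nonneg_left _ h8
            exact le_add_of_nonneg_right (Real.rpow_nonneg (hbase_pos η).le _)
  have hq : ∀ ξ η : ℝ, a1 ξ * m1 (ξ - η) * a1 η ≤ 8^(σ/2) * (a1 η + a1 ξ) := by
    intro ξ η
    calc a1 ξ * m1 (ξ-η) * a1 η
        ≤ a1 ξ * (8^(σ/2) * ((w^4+ξ^2)^(σ/2) + (w^4+η^2)^(σ/2))) * a1 η := by
          apply mul_le_mul_of_nonneg_right _ (ha1nn η)
          exact mul_le_mul_of_nonneg_left (hkey ξ η) (ha1nn ξ)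
      _ = 8^(σ/2) * (((w^4+η^2)^(σ/2) * a1 η) * a1 ξ + ((w^4+ξ^2)^(σ/2) * a1 ξ) * a1 η) := by
          ring
      _ = 8^(σ/2) * (a1 η + a1 ξ) := by rw [hone ξ, hone η]; ring_nf
  -- norm of the full integrand
  have hc0le : (Real.sqrt (2*Real.pi))⁻¹ ≤ 1 := by
    have h1 : (1:ℝ) ≤ Real.sqrt (2*Real.pi) := by
      rw [show (1:ℝ) = Real.sqrt 1 by simp]
      exact Real.sqrt_le_sqrt (by nlinarith [Real.pi_gt_three])
    exact inv_le_one_of_one_le₀ h1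
  have hpoint : ∀ ξ η : ℝ,
      ‖(starRingEnd ℂ) (φ ξ) *
          ((Complex.I * κ ^ 2 + Complex.I * (ξ : ℂ)) ^ (-(s : ℂ) - 1/2)) *
          (ft f (ξ - η)) * (↑(Real.sqrt (2 * Real.pi)))⁻¹ *
          ((Complex.I * κ ^ 2 - Complex.I * (η : ℂ)) ^ (-(s : ℂ) - 1/2)) * ψ η‖ ≤
        8^(σ/2) * (‖φ ξ‖ * g (ξ-η) * (a1 η * ‖ψ η‖) + (‖φ ξ‖ * a1 ξ) * (g (ξ-η) * ‖ψ η‖)) := by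
    intro ξ η
    have hnorm : ‖(starRingEnd ℂ) (φ ξ) *
          ((Complex.I * κ ^ 2 + Complex.I * (ξ : ℂ)) ^ (-(s : ℂ) - 1/2)) *
          (ft f (ξ - η)) * (↑(Real.sqrt (2 * Real.pi)))⁻¹ *
          ((Complex.I * κ ^ 2 - Complex.I * (η : ℂ)) ^ (-(s : ℂ) - 1/2)) * ψ η‖ =
        (Real.sqrt (2*Real.pi))⁻¹ *
          ((a1 ξ * m1 (ξ-η) * a1 η) * (‖φ ξ‖ * g (ξ-η) * ‖ψ η‖)) := by
      simp only [norm_mul, Complex.norm_conj]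
      rw [habs_plus ξ, habs_minus η]
      have hinv : ‖((↑(Real.sqrt (2 * Real.pi)) : ℂ))⁻¹‖
          = (Real.sqrt (2*Real.pi))⁻¹ := by
        rw [norm_inv, Complex.norm_real, Real.norm_eq_abs, _root_.abs_of_nonneg (Real.sqrt_nonneg _)]
      rw [hinv]
      rw [hft_eq (ξ - η)]
      ring
    rw [hnorm]
    have hp : 0 ≤ ‖φ ξ‖ * g (ξ-η) * ‖ψ η‖ := by
      apply mul_nonneg (mul_nonneg (norm_nonneg _) (hgnn _)) (norm_nonneg _)
    calc (Real.sqrt (2*Real.pi))⁻¹ *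
          ((a1 ξ * m1 (ξ-η) * a1 η) * (‖φ ξ‖ * g (ξ-η) * ‖ψ η‖))
        ≤ 1 * ((a1 ξ * m1 (ξ-η) * a1 η) * (‖φ ξ‖ * g (ξ-η) * ‖ψ η‖)) := by
          apply mul_le_mul_of_nonneg_right hc0le
          apply mul_nonneg _ hp
          exact mul_nonneg (mul_nonneg (ha1nn ξ) (hm1nn _)) (ha1nn η)
      _ = (a1 ξ * m1 (ξ-η) * a1 η) * (‖φ ξ‖ * g (ξ-η) * ‖ψ η‖) := one_mul _
      _ ≤ (8^(σ/2) * (a1 η + a1 ξ)) * (‖φ ξ‖ * g (ξ-η) * ‖ψ η‖) :=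
          mul_le_mul_of_nonneg_right (hq ξ η) hp
      _ = 8^(σ/2) * (‖φ ξ‖ * g (ξ-η) * (a1 η * ‖ψ η‖) + (‖φ ξ‖ * a1 ξ) * (g (ξ-η) * ‖ψ η‖)) := by
          ring
  -- ENNReal-valued functions
  set Φ : ℝ → ENNReal := fun ξ => ENNReal.ofReal ‖φ ξ‖ with hΦdef
  set Ψ : ℝ → ENNReal := fun η => ENNReal.ofReal ‖ψ η‖ with hΨdef
  set A : ℝ → ENNReal := fun t => ENNReal.ofReal (a1 t) with hAdef
  set G : ℝ → ENNReal := fun ζ => ENNReal.ofReal (g ζ) with hGdef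
  have ha1c : Continuous a1 :=
    Continuous.rpow_const (continuous_const.add (continuous_pow 2))
      fun t => Or.inl (hbase_pos t).ne'
  have hΦm : Measurable Φ := ENNReal.measurable_ofReal.comp φ.continuous.norm.measurable
  have hΨm : Measurable Ψ := ENNReal.measurable_ofReal.comp ψ.continuous.norm.measurable
  have hAm : Measurable A := ENNReal.measurable_ofReal.comp ha1c.measurable
  have hGm : Measurable G := ENNReal.measurable_ofReal.comp hgc.measurable
  set NΦ : ENNReal := ∫⁻ ξ, Φ ξ ^ (2:ℝ) with hNΦdef
  set NΨ : ENNReal := ∫⁻ η, Ψ η ^ (2:ℝ) with hNΨdef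
  set NA : ENNReal := ∫⁻ t, A t ^ (2:ℝ) with hNAdef
  set NG : ENNReal := ∫⁻ ζ, G ζ ^ (2:ℝ) with hNGdef
  -- integrability of squares of Schwartz functions
  have hsq : ∀ χ : SchwartzMap ℝ ℂ, Integrable (fun t : ℝ => ‖χ t‖^2) := by
    intro χ
    refine ((χ.integrable (μ := volume)).norm.const_mul ((SchwartzMap.seminorm ℝ 0 0) χ)).mono'
      ((χ.continuous.norm.pow 2).aestronglyMeasurable) ?_
    filter_upwards with t
    rw [Real.norm_eq_abs, _root_.abs_of_nonneg (by positivity), pow_two]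
    exact mul_le_mul_of_nonneg_right (SchwartzMap.norm_le_seminorm ℝ χ t) (norm_nonneg _)
  have hNΦ_eq : NΦ = ENNReal.ofReal (∫ ξ : ℝ, ‖φ ξ‖^2) := by
    rw [ofReal_integral_eq_lintegral_ofReal (hsq φ) (ae_of_all _ fun t => sq_nonneg _), hNΦdef]
    exact lintegral_congr fun t => ofReal_sq (norm_nonneg _)
  have hNΨ_eq : NΨ = ENNReal.ofReal (∫ η : ℝ, ‖ψ η‖^2) := by
    rw [ofReal_integral_eq_lintegral_ofReal (hsq ψ) (ae_of_all _ fun t => sq_nonneg _), hNΨdef]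
    exact lintegral_congr fun t => ofReal_sq (norm_nonneg _)
  -- the weighted Sobolev norm of f
  have hgsq : ∀ ζ : ℝ, g ζ ^ 2 = (4*w^4 + ζ^2) ^ (-s - 1/2) * ‖ft f ζ‖^2 := by
    intro ζ
    rw [hgdef]
    rw [mul_pow, ← Real.rpow_natCast ((4*w^4+ζ^2) ^ (-(σ/2))) 2,
      ← Real.rpow_mul (hbase4_pos ζ).le]
    congr 2
    push_cast
    rw [hσdef]; ring
  have hexpσ : (-s - 1/2 : ℝ) = -σ := by rw [hσdef]; ring
  have hsob_int : Integrable (fun ζ : ℝ => (4*w^4 + ζ^2) ^ (-s - 1/2) * ‖ft f ζ‖^2) := by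
    refine (hCs_int.const_mul (M^2)).mono'
      (((Continuous.rpow_const (continuous_const.add (continuous_pow 2))
        fun t => Or.inl (hbase4_pos t).ne').mul (hftc.norm.pow 2)).aestronglyMeasurable) ?_
    filter_upwards with ζ
    rw [Real.norm_eq_abs, _root_.abs_of_nonneg
      (mul_nonneg (Real.rpow_nonneg (hbase4_pos ζ).le _) (sq_nonneg _))]
    calc (4*w^4 + ζ^2) ^ (-s - 1/2) * ‖ft f ζ‖^2
        ≤ (1 + ζ^2) ^ (-σ) * M^2 := by
          apply mul_le_mul
          · rw [hexpσ]
            exact Real.rpow_le_rpow_of_nonpos (by nlinarith [sq_nonneg ζ])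
              (by nlinarith [hw4]) (by linarith)
          · exact pow_le_pow_left₀ (norm_nonneg _) (hftbd ζ) 2
          · exact sq_nonneg _
          · exact Real.rpow_nonneg (by positivity) _
      _ = M^2 * (1 + ζ^2) ^ (-σ) := mul_comm _ _
  have hsob_nn : 0 ≤ sobNormSq w (-s - 1/2) f := by
    unfold sobNormSq
    exact integral_nonneg fun ζ =>
      mul_nonneg (Real.rpow_nonneg (hbase4_pos ζ).le _) (sq_nonneg _)
  have hNG_eq : NG = ENNReal.ofReal (sobNormSq w (-s - 1/2) f) := by
    unfold sobNormSq
    rw [ofReal_integral_eq_lintegral_ofReal hsob_int (ae_of_all _ fun ζ =>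
      mul_nonneg (Real.rpow_nonneg (hbase4_pos ζ).le _) (sq_nonneg _)), hNGdef]
    refine lintegral_congr fun ζ => ?_
    rw [show G ζ ^ (2:ℝ) = ENNReal.ofReal (g ζ ^2) from ofReal_sq (hgnn ζ), hgsq ζ]
  -- the weight integral
  have ha1sq : ∀ t : ℝ, a1 t ^ 2 = (w^4 + t^2) ^ (-σ) := by
    intro t
    rw [ha1def]
    rw [← Real.rpow_natCast ((w^4+t^2) ^ (-(σ/2))) 2, ← Real.rpow_mul (hbase_pos t).le]
    congr 1
    push_cast; ring
  have hwint : Integrable (fun t : ℝ => (w^4 + t^2) ^ (-σ)) := by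
    refine hCs_int.mono'
      ((Continuous.rpow_const (continuous_const.add (continuous_pow 2))
        fun t => Or.inl (hbase_pos t).ne').aestronglyMeasurable) ?_
    filter_upwards with t
    rw [Real.norm_eq_abs, _root_.abs_of_nonneg (Real.rpow_nonneg (hbase_pos t).le _)]
    exact Real.rpow_le_rpow_of_nonpos (by nlinarith [sq_nonneg t]) (by nlinarith [hw4])
      (by linarith)
  have hNA_eq : NA = ENNReal.ofReal (Cs * w ^ (-(4*s))) := by
    have hval : (∫ t : ℝ, (w^4 + t^2) ^ (-σ)) = Cs * w ^ (-(4*s)) := by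
      have hsub := Measure.integral_comp_mul_left (fun y : ℝ => (w^4 + y^2) ^ (-σ)) (w^2)
      have hw4σ : ((w:ℝ)^4) ^ (-σ) = w ^ (-(4*σ)) := by
        rw [← Real.rpow_natCast w 4, ← Real.rpow_mul hw0.le]
        congr 1; push_cast; ring
      have hlhs : (∫ x : ℝ, (w^4 + (w^2 * x)^2) ^ (-σ)) = w ^ (-(4*σ)) * Cs := by
        have : ∀ x : ℝ, (w^4 + (w^2 * x)^2) ^ (-σ) = w ^ (-(4*σ)) * (1 + x^2) ^ (-σ) := by
          intro x
          rw [show w^4 + (w^2*x)^2 = w^4 * (1 + x^2) by ring,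
            Real.mul_rpow (by positivity) (by positivity), hw4σ]
        simp_rw [this]
        rw [integral_const_mul, hCsdef]
      rw [hlhs] at hsub
      have hw2ne : (w^2 : ℝ) ≠ 0 := by positivity
      rw [smul_eq_mul, _root_.abs_of_nonneg (by positivity : (0:ℝ) ≤ (w^2)⁻¹)] at hsub
      have : (∫ y : ℝ, (w^4 + y^2) ^ (-σ)) = w^2 * (w ^ (-(4*σ)) * Cs) := by
        field_simp at hsub ⊢
        linarith [hsub]
      rw [this]
      rw [← Real.rpow_natCast w 2, ← mul_assoc, ← Real.rpow_add hw0]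
      rw [show ((2:ℕ):ℝ) + -(4*σ) = -(4*s) by rw [hσdef]; push_cast; ring]
      ring
    rw [← hval, ofReal_integral_eq_lintegral_ofReal hwint (ae_of_all _ fun t =>
      Real.rpow_nonneg (hbase_pos t).le _), hNAdef]
    refine lintegral_congr fun t => ?_
    rw [show A t ^ (2:ℝ) = ENNReal.ofReal (a1 t ^ 2) from ofReal_sq (ha1nn t), ha1sq t]
  -- square roots
  have hNΦ_half : NΦ ^ (1/2:ℝ) = ENNReal.ofReal (Real.sqrt (∫ ξ : ℝ, ‖φ ξ‖^2)) := by
    rw [hNΦ_eq, ofReal_half (integral_nonneg fun t => sq_nonneg _)]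
  have hNΨ_half : NΨ ^ (1/2:ℝ) = ENNReal.ofReal (Real.sqrt (∫ η : ℝ, ‖ψ η‖^2)) := by
    rw [hNΨ_eq, ofReal_half (integral_nonneg fun t => sq_nonneg _)]
  have hNG_half : NG ^ (1/2:ℝ) = ENNReal.ofReal (Real.sqrt (sobNormSq w (-s - 1/2) f)) := by
    rw [hNG_eq, ofReal_half hsob_nn]
  have hNA_half : NA ^ (1/2:ℝ) = ENNReal.ofReal (Real.sqrt Cs * w ^ (-(2*s))) := by
    rw [hNA_eq, ofReal_half (mul_nonneg hCs0 (Real.rpow_nonneg hw0.le _))]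
    congr 1
    rw [Real.sqrt_mul hCs0, Real.sqrt_eq_rpow (w ^ (-(4*s))), ← Real.rpow_mul hw0.le]
    congr 1
    ring
  -- ENNReal pointwise bound and the two double integrals
  set oK : ENNReal := ENNReal.ofReal (8 ^ (σ/2)) with hoKdef
  set T1 : ENNReal := ∫⁻ ξ, ∫⁻ η, Φ ξ * G (ξ - η) * (A η * Ψ η) with hT1def
  set T2 : ENNReal := ∫⁻ ξ, ∫⁻ η, (Φ ξ * A ξ) * (G (ξ - η) * Ψ η) with hT2def
  have hofR1 : ∀ ξ η : ℝ, ENNReal.ofReal (‖φ ξ‖ * g (ξ-η) * (a1 η * ‖ψ η‖))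
      = Φ ξ * G (ξ - η) * (A η * Ψ η) := by
    intro ξ η
    rw [ENNReal.ofReal_mul (mul_nonneg (norm_nonneg _) (hgnn _)),
        ENNReal.ofReal_mul (norm_nonneg _), ENNReal.ofReal_mul (ha1nn _)]
  have hofR2 : ∀ ξ η : ℝ, ENNReal.ofReal ((‖φ ξ‖ * a1 ξ) * (g (ξ-η) * ‖ψ η‖))
      = (Φ ξ * A ξ) * (G (ξ - η) * Ψ η) := by
    intro ξ η
    rw [ENNReal.ofReal_mul (mul_nonneg (norm_nonneg _) (ha1nn _)),
        ENNReal.ofReal_mul (norm_nonneg _), ENNReal.ofReal_mul (hgnn _)]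
  have hpointE : ∀ ξ η : ℝ,
      ENNReal.ofReal ‖(starRingEnd ℂ) (φ ξ) *
              ((Complex.I * κ ^ 2 + Complex.I * (ξ : ℂ)) ^ (-(s : ℂ) - 1/2)) *
              (ft f (ξ - η)) * (↑(Real.sqrt (2 * Real.pi)))⁻¹ *
              ((Complex.I * κ ^ 2 - Complex.I * (η : ℂ)) ^ (-(s : ℂ) - 1/2)) * ψ η‖ ≤
        oK * (Φ ξ * G (ξ - η) * (A η * Ψ η) + (Φ ξ * A ξ) * (G (ξ - η) * Ψ η)) := by
    intro ξ η
    refine le_trans (ENNReal.ofReal_le_ofReal (hpoint ξ η)) (le_of_eq ?_)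
    rw [ENNReal.ofReal_mul (Real.rpow_nonneg (by norm_num) _),
        ENNReal.ofReal_add
          (mul_nonneg (mul_nonneg (norm_nonneg _) (hgnn _))
            (mul_nonneg (ha1nn _) (norm_nonneg _)))
          (mul_nonneg (mul_nonneg (norm_nonneg _) (ha1nn _))
            (mul_nonneg (hgnn _) (norm_nonneg _))),
        hofR1, hofR2, hoKdef]
  have hum1 : Measurable (fun p : ℝ × ℝ => Φ p.1 * G (p.1 - p.2) * (A p.2 * Ψ p.2)) :=
    ((hΦm.comp measurable_fst).mul (hGm.comp (measurable_fst.sub measurable_snd))).mul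
      ((hAm.comp measurable_snd).mul (hΨm.comp measurable_snd))
  have hin1 : ∀ ξ : ℝ, Measurable (fun η : ℝ => Φ ξ * G (ξ - η) * (A η * Ψ η)) :=
    fun ξ => (measurable_const.mul (hGm.comp (measurable_const.sub measurable_id))).mul
      (hAm.mul hΨm)
  have hsplit : (∫⁻ ξ : ℝ, ∫⁻ η : ℝ, ENNReal.ofReal ‖(starRingEnd ℂ) (φ ξ) *
              ((Complex.I * κ ^ 2 + Complex.I * (ξ : ℂ)) ^ (-(s : ℂ) - 1/2)) *
              (ft f (ξ - η)) * (↑(Real.sqrt (2 * Real.pi)))⁻¹ *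
              ((Complex.I * κ ^ 2 - Complex.I * (η : ℂ)) ^ (-(s : ℂ) - 1/2)) * ψ η‖) ≤ oK * (T1 + T2) := by
    calc (∫⁻ ξ : ℝ, ∫⁻ η : ℝ, ENNReal.ofReal ‖(starRingEnd ℂ) (φ ξ) *
              ((Complex.I * κ ^ 2 + Complex.I * (ξ : ℂ)) ^ (-(s : ℂ) - 1/2)) *
              (ft f (ξ - η)) * (↑(Real.sqrt (2 * Real.pi)))⁻¹ *
              ((Complex.I * κ ^ 2 - Complex.I * (η : ℂ)) ^ (-(s : ℂ) - 1/2)) * ψ η‖)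
        ≤ ∫⁻ ξ : ℝ, ∫⁻ η : ℝ,
            oK * (Φ ξ * G (ξ - η) * (A η * Ψ η) + (Φ ξ * A ξ) * (G (ξ - η) * Ψ η)) :=
          lintegral_mono fun ξ => lintegral_mono fun η => hpointE ξ η
      _ = ∫⁻ ξ : ℝ, oK * ((∫⁻ η : ℝ, Φ ξ * G (ξ - η) * (A η * Ψ η)) +
            ∫⁻ η : ℝ, (Φ ξ * A ξ) * (G (ξ - η) * Ψ η)) := by
          refine lintegral_congr fun ξ => ?_
          rw [lintegral_const_mul' _ _ ENNReal.ofReal_ne_top,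
              lintegral_add_left' (hin1 ξ).aemeasurable]
      _ = oK * (T1 + T2) := by
          rw [lintegral_const_mul' _ _ ENNReal.ofReal_ne_top,
              lintegral_add_left' hum1.lintegral_prod_right'.aemeasurable, ← hT1def, ← hT2def]
  -- shifted L² norms of G
  have hGshiftR : ∀ η : ℝ, (∫⁻ ξ : ℝ, G (ξ - η) ^ (2:ℝ)) = NG := fun η => by
    rw [hNGdef]; exact lint_sub_right (fun ζ => G ζ ^ (2:ℝ)) η
  have hGshiftL : ∀ ξ : ℝ, (∫⁻ η : ℝ, G (ξ - η) ^ (2:ℝ)) = NG := fun ξ => by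
    rw [hNGdef]; exact lint_sub_left (fun ζ => G ζ ^ (2:ℝ)) ξ
  have hfinΦG : NΦ ^ (1/2:ℝ) * NG ^ (1/2:ℝ) ≠ ⊤ := by
    rw [hNΦ_half, hNG_half]
    exact ENNReal.mul_ne_top ENNReal.ofReal_ne_top ENNReal.ofReal_ne_top
  have hfinGΨ : NG ^ (1/2:ℝ) * NΨ ^ (1/2:ℝ) ≠ ⊤ := by
    rw [hNG_half, hNΨ_half]
    exact ENNReal.mul_ne_top ENNReal.ofReal_ne_top ENNReal.ofReal_ne_top
  have hT1bd : T1 ≤ NΦ ^ (1/2:ℝ) * NG ^ (1/2:ℝ) * (NA ^ (1/2:ℝ) * NΨ ^ (1/2:ℝ)) := by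
    have hswap : T1 = ∫⁻ η : ℝ, ∫⁻ ξ : ℝ, Φ ξ * G (ξ - η) * (A η * Ψ η) := by
      rw [hT1def]; exact lintegral_lintegral_swap hum1.aemeasurable
    rw [hswap]
    calc (∫⁻ η : ℝ, ∫⁻ ξ : ℝ, Φ ξ * G (ξ - η) * (A η * Ψ η))
        = ∫⁻ η : ℝ, (∫⁻ ξ : ℝ, Φ ξ * G (ξ - η)) * (A η * Ψ η) :=
          lintegral_congr fun η => lintegral_mul_const' _ _
            (ENNReal.mul_ne_top ENNReal.ofReal_ne_top ENNReal.ofReal_ne_top)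
      _ ≤ ∫⁻ η : ℝ, (NΦ ^ (1/2:ℝ) * NG ^ (1/2:ℝ)) * (A η * Ψ η) := by
          refine lintegral_mono fun η => mul_le_mul_left ?_ _
          calc (∫⁻ ξ : ℝ, Φ ξ * G (ξ - η))
              ≤ (∫⁻ ξ : ℝ, Φ ξ ^ (2:ℝ)) ^ (1/2:ℝ) * (∫⁻ ξ : ℝ, G (ξ - η) ^ (2:ℝ)) ^ (1/2:ℝ) :=
                holder2 hΦm.aemeasurable
                  ((hGm.comp (measurable_id.sub measurable_const)).aemeasurable)
            _ = NΦ ^ (1/2:ℝ) * NG ^ (1/2:ℝ) := by rw [hGshiftR η, ← hNΦdef]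
      _ = (NΦ ^ (1/2:ℝ) * NG ^ (1/2:ℝ)) * ∫⁻ η : ℝ, A η * Ψ η :=
          lintegral_const_mul' _ _ hfinΦG
      _ ≤ (NΦ ^ (1/2:ℝ) * NG ^ (1/2:ℝ)) * (NA ^ (1/2:ℝ) * NΨ ^ (1/2:ℝ)) := by
          refine mul_le_mul_right ?_ _
          calc (∫⁻ η : ℝ, A η * Ψ η)
              ≤ (∫⁻ η : ℝ, A η ^ (2:ℝ)) ^ (1/2:ℝ) * (∫⁻ η : ℝ, Ψ η ^ (2:ℝ)) ^ (1/2:ℝ) :=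
                holder2 hAm.aemeasurable hΨm.aemeasurable
            _ = NA ^ (1/2:ℝ) * NΨ ^ (1/2:ℝ) := by rw [← hNAdef, ← hNΨdef]
  have hT2bd : T2 ≤ (NΦ ^ (1/2:ℝ) * NA ^ (1/2:ℝ)) * (NG ^ (1/2:ℝ) * NΨ ^ (1/2:ℝ)) := by
    rw [hT2def]
    calc (∫⁻ ξ : ℝ, ∫⁻ η : ℝ, (Φ ξ * A ξ) * (G (ξ - η) * Ψ η))
        = ∫⁻ ξ : ℝ, (Φ ξ * A ξ) * ∫⁻ η : ℝ, G (ξ - η) * Ψ η :=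
          lintegral_congr fun ξ => lintegral_const_mul' _ _
            (ENNReal.mul_ne_top ENNReal.ofReal_ne_top ENNReal.ofReal_ne_top)
      _ ≤ ∫⁻ ξ : ℝ, (Φ ξ * A ξ) * (NG ^ (1/2:ℝ) * NΨ ^ (1/2:ℝ)) := by
          refine lintegral_mono fun ξ => mul_le_mul_right ?_ _
          calc (∫⁻ η : ℝ, G (ξ - η) * Ψ η)
              ≤ (∫⁻ η : ℝ, G (ξ - η) ^ (2:ℝ)) ^ (1/2:ℝ) * (∫⁻ η : ℝ, Ψ η ^ (2:ℝ)) ^ (1/2:ℝ) :=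
                holder2 ((hGm.comp (measurable_const.sub measurable_id)).aemeasurable)
                  hΨm.aemeasurable
            _ = NG ^ (1/2:ℝ) * NΨ ^ (1/2:ℝ) := by rw [hGshiftL ξ, ← hNΨdef]
      _ = (∫⁻ ξ : ℝ, Φ ξ * A ξ) * (NG ^ (1/2:ℝ) * NΨ ^ (1/2:ℝ)) :=
          lintegral_mul_const' _ _ hfinGΨ
      _ ≤ (NΦ ^ (1/2:ℝ) * NA ^ (1/2:ℝ)) * (NG ^ (1/2:ℝ) * NΨ ^ (1/2:ℝ)) := by
          refine mul_le_mul_left ?_ _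
          calc (∫⁻ ξ : ℝ, Φ ξ * A ξ)
              ≤ (∫⁻ ξ : ℝ, Φ ξ ^ (2:ℝ)) ^ (1/2:ℝ) * (∫⁻ ξ : ℝ, A ξ ^ (2:ℝ)) ^ (1/2:ℝ) :=
                holder2 hΦm.aemeasurable hAm.aemeasurable
            _ = NΦ ^ (1/2:ℝ) * NA ^ (1/2:ℝ) := by rw [← hNΦdef, ← hNAdef]
  -- combine
  set X : ENNReal := NΦ ^ (1/2:ℝ) * NG ^ (1/2:ℝ) * (NA ^ (1/2:ℝ) * NΨ ^ (1/2:ℝ)) with hXdef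
  have hT2X : T2 ≤ X := hT2bd.trans_eq (by rw [hXdef]; ring)
  have hkey2 : (∫⁻ ξ : ℝ, ∫⁻ η : ℝ, ENNReal.ofReal ‖(starRingEnd ℂ) (φ ξ) *
              ((Complex.I * κ ^ 2 + Complex.I * (ξ : ℂ)) ^ (-(s : ℂ) - 1/2)) *
              (ft f (ξ - η)) * (↑(Real.sqrt (2 * Real.pi)))⁻¹ *
              ((Complex.I * κ ^ 2 - Complex.I * (η : ℂ)) ^ (-(s : ℂ) - 1/2)) * ψ η‖) ≤ oK * (X + X) :=
    hsplit.trans (mul_le_mul_right (add_le_add hT1bd hT2X) _)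
  -- identify the right-hand side
  set Rφ : ℝ := Real.sqrt (∫ ξ : ℝ, ‖φ ξ‖^2) with hRφdef
  set Rψ : ℝ := Real.sqrt (∫ η : ℝ, ‖ψ η‖^2) with hRψdef
  set Rg : ℝ := Real.sqrt (sobNormSq w (-s - 1/2) f) with hRgdef
  set Ra : ℝ := Real.sqrt Cs * w ^ (-(2*s)) with hRadef
  have hRφ0 : 0 ≤ Rφ := Real.sqrt_nonneg _
  have hRψ0 : 0 ≤ Rψ := Real.sqrt_nonneg _
  have hRg0 : 0 ≤ Rg := Real.sqrt_nonneg _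
  have hRa0 : 0 ≤ Ra := mul_nonneg (Real.sqrt_nonneg _) (Real.rpow_nonneg hw0.le _)
  have hXval : X = ENNReal.ofReal (Rφ * Rg * (Ra * Rψ)) := by
    rw [hXdef, hNΦ_half, hNG_half, hNA_half, hNΨ_half,
        ENNReal.ofReal_mul (mul_nonneg hRφ0 hRg0), ENNReal.ofReal_mul hRφ0,
        ENNReal.ofReal_mul hRa0]
  have hprodnn : 0 ≤ Rφ * Rg * (Ra * Rψ) :=
    mul_nonneg (mul_nonneg hRφ0 hRg0) (mul_nonneg hRa0 hRψ0)
  have h2X : oK * (X + X) = ENNReal.ofReal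
      (8^(σ/2) * (Rφ * Rg * (Ra * Rψ) + Rφ * Rg * (Ra * Rψ))) := by
    rw [hXval, hoKdef, ← ENNReal.ofReal_add hprodnn hprodnn,
        ← ENNReal.ofReal_mul (Real.rpow_nonneg (by norm_num) _)]
  have hreal_final : 8^(σ/2) * (Rφ * Rg * (Ra * Rψ) + Rφ * Rg * (Ra * Rψ))
      ≤ (2 * 8^(σ/2) * Real.sqrt Cs + 1) * w ^ (-(2*s)) * Rg * Rφ * Rψ := by
    have h8nn : (0:ℝ) ≤ 8^(σ/2) := Real.rpow_nonneg (by norm_num) _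
    have h1 : 8^(σ/2) * (Rφ * Rg * (Ra * Rψ) + Rφ * Rg * (Ra * Rψ))
        = (2 * 8^(σ/2) * Real.sqrt Cs) * (w ^ (-(2*s)) * Rg * Rφ * Rψ) := by
      rw [hRadef]; ring
    have h2 : (2 * 8^(σ/2) * Real.sqrt Cs + 1) * w ^ (-(2*s)) * Rg * Rφ * Rψ
        = (2 * 8^(σ/2) * Real.sqrt Cs + 1) * (w ^ (-(2*s)) * Rg * Rφ * Rψ) := by ring
    rw [h1, h2]
    apply mul_le_mul_of_nonneg_right (by linarith)
    exact mul_nonneg (mul_nonneg (mul_nonneg (Real.rpow_nonneg hw0.le _) hRg0) hRφ0) hRψ0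
  have hRHSnn : 0 ≤ (2 * 8^(σ/2) * Real.sqrt Cs + 1) * w ^ (-(2*s)) * Rg * Rφ * Rψ := by
    have h8nn : (0:ℝ) ≤ 8^(σ/2) := Real.rpow_nonneg (by norm_num) _
    have : (0:ℝ) ≤ 2 * 8^(σ/2) * Real.sqrt Cs + 1 := by
      nlinarith [Real.sqrt_nonneg Cs]
    exact mul_nonneg (mul_nonneg (mul_nonneg (mul_nonneg this
      (Real.rpow_nonneg hw0.le _)) hRg0) hRφ0) hRψ0
  have key : (∫⁻ ξ : ℝ, ∫⁻ η : ℝ, ENNReal.ofReal ‖(starRingEnd ℂ) (φ ξ) *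
              ((Complex.I * κ ^ 2 + Complex.I * (ξ : ℂ)) ^ (-(s : ℂ) - 1/2)) *
              (ft f (ξ - η)) * (↑(Real.sqrt (2 * Real.pi)))⁻¹ *
              ((Complex.I * κ ^ 2 - Complex.I * (η : ℂ)) ^ (-(s : ℂ) - 1/2)) * ψ η‖) ≤
      ENNReal.ofReal ((2 * 8^(σ/2) * Real.sqrt Cs + 1) * w ^ (-(2*s)) * Rg * Rφ * Rψ) :=
    hkey2.trans (by rw [h2X]; exact ENNReal.ofReal_le_ofReal hreal_final)
  -- conclusion
  refine le_trans (norm_integral_le_lintegral_norm _) ?_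
  have hstep2 : (∫⁻ ξ : ℝ, ENNReal.ofReal ‖∫ η : ℝ, (starRingEnd ℂ) (φ ξ) *
              ((Complex.I * κ ^ 2 + Complex.I * (ξ : ℂ)) ^ (-(s : ℂ) - 1/2)) *
              (ft f (ξ - η)) * (↑(Real.sqrt (2 * Real.pi)))⁻¹ *
              ((Complex.I * κ ^ 2 - Complex.I * (η : ℂ)) ^ (-(s : ℂ) - 1/2)) * ψ η‖) ≤
      ∫⁻ ξ : ℝ, ∫⁻ η : ℝ, ENNReal.ofReal ‖(starRingEnd ℂ) (φ ξ) *
              ((Complex.I * κ ^ 2 + Complex.I * (ξ : ℂ)) ^ (-(s : ℂ) - 1/2)) *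
              (ft f (ξ - η)) * (↑(Real.sqrt (2 * Real.pi)))⁻¹ *
              ((Complex.I * κ ^ 2 - Complex.I * (η : ℂ)) ^ (-(s : ℂ) - 1/2)) * ψ η‖ := by
    refine lintegral_mono fun ξ => ?_
    rw [ofReal_norm_eq_enorm]
    refine le_trans (enorm_integral_le_lintegral_enorm _) (le_of_eq ?_)
    exact lintegral_congr fun η => (ofReal_norm_eq_enorm _).symm
  calc (∫⁻ ξ : ℝ, ENNReal.ofReal ‖∫ η : ℝ, (starRingEnd ℂ) (φ ξ) *
              ((Complex.I * κ ^ 2 + Complex.I * (ξ : ℂ)) ^ (-(s : ℂ) - 1/2)) *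
              (ft f (ξ - η)) * (↑(Real.sqrt (2 * Real.pi)))⁻¹ *
              ((Complex.I * κ ^ 2 - Complex.I * (η : ℂ)) ^ (-(s : ℂ) - 1/2)) * ψ η‖).toReal
      ≤ (∫⁻ ξ : ℝ, ∫⁻ η : ℝ, ENNReal.ofReal ‖(starRingEnd ℂ) (φ ξ) *
              ((Complex.I * κ ^ 2 + Complex.I * (ξ : ℂ)) ^ (-(s : ℂ) - 1/2)) *
              (ft f (ξ - η)) * (↑(Real.sqrt (2 * Real.pi)))⁻¹ *
              ((Complex.I * κ ^ 2 - Complex.I * (η : ℂ)) ^ (-(s : ℂ) - 1/2)) * ψ η‖).toReal :=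
        ENNReal.toReal_mono (key.trans_lt ENNReal.ofReal_lt_top).ne hstep2
    _ ≤ (ENNReal.ofReal ((2 * 8^(σ/2) * Real.sqrt Cs + 1) * w ^ (-(2*s)) *
          Rg * Rφ * Rψ)).toReal :=
        ENNReal.toReal_mono ENNReal.ofReal_ne_top key
    _ = (2 * 8^(σ/2) * Real.sqrt Cs + 1) * w ^ (-(2*s)) * Rg * Rφ * Rψ :=
        ENNReal.toReal_ofReal hRHSnn
end

section
/- Suppose smooth functions γ(·;κ), g₁₂(·;κ), g₂₁(·;κ) satisfy γ'(κ) = 2κ(q g₂₁(κ) - r g₁₂(κ)), g₁₂'(κ) = -2iκ²g₁₂(κ) - κq(γ(κ)+1), g₂₁'(κ) = 2iκ²g₂₁(κ) + κr(γ(κ)+1), and similarly at parameter ϰ. Then for κ² ≠ ϰ², the identity ((κ²-ϰ²)/κ²)[g₁₂'(κ)g₂₁(ϰ) + g₂₁'(κ)g₁₂(ϰ)] = [g₁₂(κ)g₂₁(ϰ) + g₂₁(κ)g₁₂(ϰ)]' + (ϰ/(2κ))[(γ(κ)+1)(γ(ϰ)+1)]' holds pointwise. -/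
open Complex

/-- The commuting-flow identity: if `γ, g₁₂, g₂₁` satisfy the microscopic ODE system at the
parameters `κ` and `ϰ` (with `iκ², iϰ²` real, `κ, ϰ ≠ 0`, `κ² ≠ ϰ²`), then
`((κ²-ϰ²)/κ²)[g₁₂'(κ)g₂₁(ϰ) + g₂₁'(κ)g₁₂(ϰ)]
  = [g₁₂(κ)g₂₁(ϰ) + g₂₁(κ)g₁₂(ϰ)]' + (ϰ/(2κ))[(γ(κ)+1)(γ(ϰ)+1)]'` pointwise. -/
theorem micro_As_commute
    (q r γκ γϰ g12κ g12ϰ g21κ g21ϰ : ℝ → ℂ) (κ ϰ : ℂ)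
    (hκ0 : κ ≠ 0) (hϰ0 : ϰ ≠ 0) (hne : κ ^ 2 ≠ ϰ ^ 2)
    (hiκ : (Complex.I * κ ^ 2).im = 0) (hiϰ : (Complex.I * ϰ ^ 2).im = 0)
    (hγκ : ∀ x, HasDerivAt γκ (2 * κ * (q x * g21κ x - r x * g12κ x)) x)
    (hg12κ : ∀ x, HasDerivAt g12κ (-2 * Complex.I * κ ^ 2 * g12κ x - κ * q x * (γκ x + 1)) x)
    (hg21κ : ∀ x, HasDerivAt g21κ (2 * Complex.I * κ ^ 2 * g21κ x + κ * r x * (γκ x + 1)) x)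
    (hγϰ : ∀ x, HasDerivAt γϰ (2 * ϰ * (q x * g21ϰ x - r x * g12ϰ x)) x)
    (hg12ϰ : ∀ x, HasDerivAt g12ϰ (-2 * Complex.I * ϰ ^ 2 * g12ϰ x - ϰ * q x * (γϰ x + 1)) x)
    (hg21ϰ : ∀ x, HasDerivAt g21ϰ (2 * Complex.I * ϰ ^ 2 * g21ϰ x + ϰ * r x * (γϰ x + 1)) x) :
    ∀ x : ℝ,
      ((κ ^ 2 - ϰ ^ 2) / κ ^ 2) * (deriv g12κ x * g21ϰ x + deriv g21κ x * g12ϰ x) =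
        deriv (fun y => g12κ y * g21ϰ y + g21κ y * g12ϰ y) x +
          (ϰ / (2 * κ)) * deriv (fun y => (γκ y + 1) * (γϰ y + 1)) x := by
  intro x
  have D1 := (hg12κ x).deriv
  have D2 := (hg21κ x).deriv
  have DS : deriv (fun y => g12κ y * g21ϰ y + g21κ y * g12ϰ y) x = _ := (((hg12κ x).mul (hg21ϰ x)).add ((hg21κ x).mul (hg12ϰ x))).deriv
  have DG : deriv (fun y => (γκ y + 1) * (γϰ y + 1)) x = _ := (((hγκ x).add_const 1).mul ((hγϰ x).add_const 1)).deriv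
  rw [D1, D2, DS, DG]
  field_simp
  ring_nf
end

section
/- Under the hypotheses of the microscopic ODE system (γ' = 2κ(qg₂₁ - rg₁₂), g₁₂' = -2iκ²g₁₂ - κq(γ+1), g₂₁' = 2iκ²g₂₁ + κr(γ+1)), if moreover γ, g₁₂, g₂₁ vanish at infinity, then the pointwise quadratic identity γ + γ²/2 = -2 g₁₂ g₂₁ holds on ℝ. -/
open Complex Filter

/-- Quadratic identity: if `γ, g₁₂, g₂₁` satisfy the microscopic ODE system
(`γ' = 2κ(qg₂₁ - rg₁₂)`, `g₁₂' = -2iκ²g₁₂ - κq(γ+1)`, `g₂₁' = 2iκ²g₂₁ + κr(γ+1)`) with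
`q` Schwartz, `r = -q̄`, `iκ² ∈ ℝ`, `|κ| ≥ 1`, and `γ, g₁₂, g₂₁` vanish at infinity, then
`γ + γ²/2 = -2 g₁₂ g₂₁` on all of `ℝ`. -/
theorem quadratic_identity
    (q : SchwartzMap ℝ ℂ) (r : ℝ → ℂ) (hr : r = fun x => -(starRingEnd ℂ) (q x))
    (κ : ℂ) (hiκ : (Complex.I * κ ^ 2).im = 0) (hκ1 : 1 ≤ ‖κ‖)
    (γ g12 g21 : ℝ → ℂ)
    (hγ : ∀ x, HasDerivAt γ (2 * κ * (q x * g21 x - r x * g12 x)) x)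
    (hg12 : ∀ x, HasDerivAt g12 (-2 * Complex.I * κ ^ 2 * g12 x - κ * q x * (γ x + 1)) x)
    (hg21 : ∀ x, HasDerivAt g21 (2 * Complex.I * κ ^ 2 * g21 x + κ * r x * (γ x + 1)) x)
    (hγ0 : Tendsto γ (cocompact ℝ) (nhds 0))
    (hg120 : Tendsto g12 (cocompact ℝ) (nhds 0))
    (hg210 : Tendsto g21 (cocompact ℝ) (nhds 0)) :
    ∀ x : ℝ, γ x + (γ x) ^ 2 / 2 = -2 * g12 x * g21 x := by
  set F : ℝ → ℂ := fun x => γ x + γ x * γ x / 2 + 2 * g12 x * g21 x with hF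
  have hF' : ∀ x, HasDerivAt F 0 x := by
    intro x
    have h1 := hγ x
    have h2 := (hg12 x).mul (hg21 x)
    have h3 := (h1.add ((h1.mul h1).div_const 2)).add (h2.const_mul 2)
    have hFe : F = fun x => γ x + γ x * γ x / 2 + 2 * (g12 x * g21 x) := by
      funext y; simp [hF, mul_assoc]
    rw [hFe]
    convert h3 using 1
    · rfl
    · rfl
    · ring
  have hconst : ∀ x y : ℝ, F x = F y :=
    is_const_of_deriv_eq_zero (fun x => (hF' x).differentiableAt)
      (fun x => (hF' x).deriv)
  have hFtend : Tendsto F (cocompact ℝ) (nhds 0) := by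
    have : Tendsto (fun x => γ x + γ x * γ x / 2 + 2 * g12 x * g21 x) (cocompact ℝ)
        (nhds (0 + (0:ℂ) * 0 / 2 + 2 * 0 * 0)) := by
      exact (hγ0.add ((hγ0.mul hγ0).div_const 2)).add
        (((tendsto_const_nhds.mul hg120).mul hg210))
    simpa using this
  have hFconst : Tendsto F (cocompact ℝ) (nhds (F 0)) := by
    have : F = fun _ => F 0 := funext fun x => hconst x 0
    rw [this]; exact tendsto_const_nhds
  have h0 : F 0 = 0 := tendsto_nhds_unique hFconst hFtend
  intro x
  have : F x = 0 := (hconst x 0).trans h0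
  simp only [hF] at this
  linear_combination this
end
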